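/- Let p be a prime and f : ℤ_p → ℤ_p a 1-Lipschitz function with Mahler coefficients (a_m). If a_0 ≢ 0 (mod p); a_1 ≡ 1 (mod p) when p is odd, and a_1 ≡ 1 (mod 4) when p = 2; and a_m ≡ 0 (mod p^{⌊log_p (m+1)⌋ + 1}) for all m ≥ 2, then f is ergodic with respect to the normalized Haar measure μ_p on ℤ_p. -/

import Mathlib

open MeasureTheory

noncomputable instance (p : ℕ) [Fact p.Prime] : MeasurableSpace ℤ_[p] := borel _
instance (p : ℕ) [Fact p.Prime] : BorelSpace ℤ_[p] := ⟨rfl⟩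

/-- The `m`-th Mahler coefficient of `f : ℤ_[p] → ℤ_[p]`:
`a_m = ∑_{i=0}^{m} (-1)^{m+i} C(m,i) f(i)`. -/
noncomputable def mahlerCoeff {p : ℕ} [Fact p.Prime] (f : ℤ_[p] → ℤ_[p]) (m : ℕ) : ℤ_[p] :=
  ∑ i ∈ Finset.range (m + 1), (-1 : ℤ_[p]) ^ (m + i) * (m.choose i : ℤ_[p]) * f i

open Finset
open scoped ENNReal


open Finset

/-- If `p^n ∣ N` and `0 < j` then `p^(n+1) ∣ p^(log_p j + 1) * C(N,j)`. -/
lemma helper_pow_dvd_choose {p : ℕ} (hp : p.Prime) (n N j : ℕ) (hN : p ^ n ∣ N)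
    (hj : 0 < j) : p ^ (n + 1) ∣ p ^ (Nat.log p j + 1) * N.choose j := by
  set v := j.factorization p with hv
  have hvj : p ^ v ∣ j := Nat.ordProj_dvd j p
  have hvlog : v ≤ Nat.log p j :=
    (Nat.le_log_iff_pow_le hp.one_lt hj.ne').mpr (Nat.le_of_dvd hj hvj)
  rcases le_or_gt n v with h | h
  · exact dvd_mul_of_dvd_left (pow_dvd_pow p (by omega)) _
  · have key : p ^ n ∣ N.choose j * j := by
      rcases Nat.eq_zero_or_pos N with h0 | hN0
      · subst h0
        rw [Nat.choose_eq_zero_of_lt hj]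
        simp
      · obtain ⟨M, rfl⟩ : ∃ M, N = M + 1 := ⟨N - 1, by omega⟩
        obtain ⟨j', rfl⟩ : ∃ j', j = j' + 1 := ⟨j - 1, by omega⟩
        have hid := Nat.add_one_mul_choose_eq M j'
        calc p ^ n ∣ (M + 1) := hN
          _ ∣ (M + 1) * M.choose j' := dvd_mul_right _ _
          _ = (M + 1).choose (j' + 1) * (j' + 1) := hid
    -- write j = p^v * t with p coprime t
    set t := j / p ^ v with ht
    have hjt : p ^ v * t = j := Nat.ordProj_mul_ordCompl_eq_self j p
    have hcop : Nat.Coprime p t := Nat.coprime_ordCompl hp hj.ne'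
    have hcop' : Nat.Coprime (p ^ n) t := Nat.Coprime.pow_left _ hcop
    have key2 : p ^ n ∣ N.choose j * p ^ v * t := by
      rw [mul_assoc, hjt]; exact key
    have key3 : p ^ n ∣ N.choose j * p ^ v :=
      (Nat.Coprime.dvd_of_dvd_mul_right hcop' key2)
    have key4 : p ^ (n - v) ∣ N.choose j := by
      have h1 : p ^ (n - v) * p ^ v ∣ N.choose j * p ^ v := by
        rw [← pow_add, Nat.sub_add_cancel h.le]; exact key3
      exact (Nat.mul_dvd_mul_iff_right (Nat.pow_pos hp.pos)).mp h1
    calc p ^ (n + 1) ∣ p ^ (Nat.log p j + 1) * p ^ (n - v) := by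
          rw [← pow_add]; exact pow_dvd_pow p (by omega)
      _ ∣ p ^ (Nat.log p j + 1) * N.choose j := mul_dvd_mul_left _ key4
open Finset

/-- Binomial (Mahler) inversion over a commutative ring: finitely many terms. -/
lemma mahler_inversion {R : Type*} [CommRing R] (g : ℕ → R) (x : ℕ) :
    ∑ m ∈ range (x + 1),
      (∑ i ∈ range (m + 1), (-1 : R) ^ (m + i) * (m.choose i : R) * g i) *
        (x.choose m : R) = g x := by
  have hinner : ∀ m ∈ range (x + 1),
      (∑ i ∈ range (m + 1), (-1 : R) ^ (m + i) * (m.choose i : R) * g i) * (x.choose m : R)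
      = ∑ i ∈ range (x + 1), (-1 : R) ^ (m + i) * (m.choose i : R) * (x.choose m : R) * g i := by
    intro m hm
    rw [mem_range] at hm
    rw [sum_mul]
    rw [← sum_subset (range_subset_range.mpr (by omega : m + 1 ≤ x + 1))]
    · exact sum_congr rfl fun i _ => by ring
    · intro i hi hni
      rw [mem_range] at hi hni
      rw [Nat.choose_eq_zero_of_lt (by omega)]
      simp
  rw [sum_congr rfl hinner, sum_comm]
  have hcol : ∀ i ∈ range (x + 1),
      (∑ m ∈ range (x + 1), (-1 : R) ^ (m + i) * (m.choose i : R) * (x.choose m : R) * g i)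
      = (if i = x then 1 else 0) * g i := by
    intro i hi
    rw [mem_range] at hi
    have hix : i ≤ x := by omega
    rw [← sum_mul]
    congr 1
    -- ∑ m, (-1)^(m+i) C(m,i) C(x,m) = if i = x then 1 else 0
    have step1 : ∀ m ∈ range (x + 1),
        (-1 : R) ^ (m + i) * (m.choose i : R) * (x.choose m : R)
        = (if i ≤ m then (-1 : R) ^ (m + i) * (x.choose i : R) * ((x - i).choose (m - i) : R)
           else 0) := by
      intro m hm
      rw [mem_range] at hm
      by_cases him : i ≤ m
      · rw [if_pos him]
        have := Nat.choose_mul (n := x) him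
        -- x.choose m * m.choose i = x.choose i * (x-i).choose (m-i)
        have hcast : (m.choose i : R) * (x.choose m : R)
            = (x.choose i : R) * ((x - i).choose (m - i) : R) := by
          rw [mul_comm (m.choose i : R)]
          exact_mod_cast congrArg (Nat.cast : ℕ → R) this
        rw [mul_assoc, hcast]; ring
      · rw [if_neg him, Nat.choose_eq_zero_of_lt (by omega)]; simp
    rw [sum_congr rfl step1, sum_ite, sum_const_zero, add_zero]
    -- the filtered set is Icc i x essentially; reindex m = i + j
    have hfil : filter (fun m => i ≤ m) (range (x + 1)) = Ico i (x + 1) := by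
      ext m; simp [mem_filter, mem_range, mem_Ico, and_comm]
    rw [hfil]
    have hre : ∑ m ∈ Ico i (x + 1), (-1 : R) ^ (m + i) * (x.choose i : R) * ((x - i).choose (m - i) : R)
        = ∑ j ∈ range (x - i + 1), (-1 : R) ^ j * ((x - i).choose j : R) * (x.choose i : R) := by
      rw [← Nat.Ico_zero_eq_range]
      rw [Finset.sum_Ico_eq_sum_range]
      have : x + 1 - i = x - i + 1 := by omega
      rw [this]
      rw [Finset.sum_Ico_eq_sum_range]
      simp only [Nat.sub_zero]
      refine sum_congr rfl fun j hj => ?_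
      rw [mem_range] at hj
      have h1 : i + j + i = 2 * i + j := by ring
      have h2 : i + j - i = j := by omega
      rw [h1, h2, pow_add, pow_mul]
      simp [neg_one_sq]
      ring
    rw [hre, ← sum_mul]
    have := @Int.alternating_sum_range_choose (x - i)
    have hca : (∑ j ∈ range (x - i + 1), (-1 : R) ^ j * ((x - i).choose j : R))
        = ((if x - i = 0 then 1 else 0 : ℤ) : R) := by
      rw [← this]
      push_cast
      rfl
    rw [hca]
    by_cases hxi : i = x
    · subst hxi; simp
    · have : ¬(x - i = 0) := by omega
      simp [this, hxi]
  rw [sum_congr rfl hcol]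
  have hfin : ∀ i ∈ range (x + 1), (if i = x then (1 : R) else 0) * g i
      = if i = x then g i else 0 := by
    intro i _; split <;> simp
  rw [sum_congr rfl hfin, sum_ite_eq' (range (x + 1)) x g]
  simp

section Main
variable {p : ℕ} [hp : Fact p.Prime] (f : ℤ_[p] → ℤ_[p])

lemma dvd_iff_norm (k : ℕ) (z : ℤ_[p]) :
    (p : ℤ_[p]) ^ k ∣ z ↔ ‖z‖ ≤ (p : ℝ) ^ (-(k : ℤ)) := by
  rw [PadicInt.norm_le_pow_iff_mem_span_pow, Ideal.mem_span_singleton]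

lemma isClosed_dvd (k : ℕ) : IsClosed {z : ℤ_[p] | (p : ℤ_[p]) ^ k ∣ z} := by
  have h : {z : ℤ_[p] | (p : ℤ_[p]) ^ k ∣ z} = {z : ℤ_[p] | ‖z‖ ≤ (p : ℝ) ^ (-(k : ℤ))} :=
    Set.ext fun z => dvd_iff_norm k z
  rw [h]
  exact isClosed_le (by continuity) continuous_const

/-- Mahler inversion for `f` at natural arguments. -/
lemma f_nat (x : ℕ) :
    f (x : ℤ_[p]) = ∑ m ∈ range (x + 1), mahlerCoeff f m * (x.choose m : ℤ_[p]) :=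
  (mahler_inversion (fun i : ℕ => f (i : ℤ_[p])) x).symm

/-- Extended-range Mahler inversion. -/
lemma f_nat' (x N : ℕ) (h : x < N) :
    f (x : ℤ_[p]) = ∑ m ∈ range N, mahlerCoeff f m * (x.choose m : ℤ_[p]) := by
  rw [f_nat f x]
  apply sum_subset (range_subset_range.mpr (by omega))
  intro m _ hm
  rw [mem_range] at hm
  rw [Nat.choose_eq_zero_of_lt (by omega)]
  simp

/-- Hockey-stick: sum of `f` over an initial segment. -/
lemma sum_f_nat (N : ℕ) :
    ∑ r ∈ range N, f (r : ℤ_[p]) = ∑ m ∈ range N, mahlerCoeff f m * (N.choose (m + 1) : ℤ_[p]) := by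
  rcases Nat.eq_zero_or_pos N with rfl | hN
  · simp
  have h1 : ∀ r ∈ range N, f (r : ℤ_[p]) = ∑ m ∈ range N, mahlerCoeff f m * (r.choose m : ℤ_[p]) :=
    fun r hr => f_nat' f r N (mem_range.mp hr)
  rw [sum_congr rfl h1, sum_comm]
  refine sum_congr rfl fun m hm => ?_
  rw [← mul_sum]
  congr 1
  have h2 : ∀ r ∈ range N, ((r.choose m : ℕ) : ℤ_[p]) = if m ≤ r then ((r.choose m : ℕ) : ℤ_[p]) else 0 := by
    intro r _
    split
    · rfl
    · rw [Nat.choose_eq_zero_of_lt (by omega)]; simp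
  rw [sum_congr rfl h2, sum_ite, sum_const_zero, add_zero]
  have hfil : filter (fun r => m ≤ r) (range N) = Icc m (N - 1) := by
    ext r; simp [mem_filter, mem_range, mem_Icc, and_comm]; omega
  rw [hfil]
  rw [← Nat.cast_sum]
  rw [Nat.sum_Icc_choose (N - 1) m]
  congr 2
  omega

/-- Key uniform differentiability lemma at natural points. -/
lemma keyK_nat (h1 : (p : ℤ_[p]) ∣ mahlerCoeff f 1 - 1)
    (h2 : ∀ m : ℕ, 2 ≤ m → (p : ℤ_[p]) ^ (Nat.log p (m + 1) + 1) ∣ mahlerCoeff f m)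
    (n x e : ℕ) :
    (p : ℤ_[p]) ^ (n + 1) ∣
      f ((x + p ^ n * e : ℕ) : ℤ_[p]) - f (x : ℤ_[p]) - (p : ℤ_[p]) ^ n * (e : ℤ_[p]) := by
  set X : ℕ := x + p ^ n * e with hX
  have hxX : x < X + 2 := by omega
  have hfX : f ((X : ℕ) : ℤ_[p]) = ∑ m ∈ range (X + 2), mahlerCoeff f m * (X.choose m : ℤ_[p]) :=
    f_nat' f X (X + 2) (by omega)
  have hfx : f (x : ℤ_[p]) = ∑ m ∈ range (X + 2), mahlerCoeff f m * (x.choose m : ℤ_[p]) :=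
    f_nat' f x (X + 2) hxX
  have hdiff : f ((X : ℕ) : ℤ_[p]) - f (x : ℤ_[p])
      = ∑ m ∈ range (X + 2), mahlerCoeff f m * ((X.choose m : ℤ_[p]) - (x.choose m : ℤ_[p])) := by
    rw [hfX, hfx, ← sum_sub_distrib]
    exact sum_congr rfl fun m _ => by ring
  -- peel off m = 0 and m = 1
  have hpeel : ∑ m ∈ range (X + 2), mahlerCoeff f m * ((X.choose m : ℤ_[p]) - (x.choose m : ℤ_[p]))
      = mahlerCoeff f 0 * ((X.choose 0 : ℤ_[p]) - (x.choose 0 : ℤ_[p]))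
        + mahlerCoeff f 1 * ((X.choose 1 : ℤ_[p]) - (x.choose 1 : ℤ_[p]))
        + ∑ m ∈ range X, mahlerCoeff f (m + 2) * ((X.choose (m + 2) : ℤ_[p]) - (x.choose (m + 2) : ℤ_[p])) := by
    rw [sum_range_succ' _ (X + 1), sum_range_succ' _ X]
    ring
  have hc0 : (X.choose 0 : ℤ_[p]) - (x.choose 0 : ℤ_[p]) = 0 := by simp
  have hc1 : (X.choose 1 : ℤ_[p]) - (x.choose 1 : ℤ_[p]) = (p : ℤ_[p]) ^ n * (e : ℤ_[p]) := by
    simp only [Nat.choose_one_right]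
    rw [hX]
    push_cast
    ring
  have key : f ((X : ℕ) : ℤ_[p]) - f (x : ℤ_[p]) - (p : ℤ_[p]) ^ n * (e : ℤ_[p])
      = (mahlerCoeff f 1 - 1) * ((p : ℤ_[p]) ^ n * (e : ℤ_[p]))
        + ∑ m ∈ range X, mahlerCoeff f (m + 2) * ((X.choose (m + 2) : ℤ_[p]) - (x.choose (m + 2) : ℤ_[p])) := by
    rw [hdiff, hpeel, hc0, hc1]
    ring
  rw [key]
  apply dvd_add
  · obtain ⟨b, hb⟩ := h1
    rw [hb]
    exact ⟨b * (e:ℤ_[p]), by rw [pow_succ]; ring⟩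
  · apply dvd_sum
    intro m _
    set M := m + 2 with hM
    -- expand X.choose M via Vandermonde
    have hvdm : (X.choose M : ℤ_[p]) - (x.choose M : ℤ_[p])
        = ∑ ij ∈ (Finset.HasAntidiagonal.antidiagonal M).erase (M, 0),
            ((x.choose ij.1 : ℤ_[p]) * ((p ^ n * e : ℕ).choose ij.2 : ℤ_[p])) := by
      have h := Nat.add_choose_eq x (p ^ n * e) M
      have hmem : ((M : ℕ), (0 : ℕ)) ∈ Finset.HasAntidiagonal.antidiagonal M := by simp
      have hsplit := Finset.sum_erase_add (Finset.HasAntidiagonal.antidiagonal M)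
        (fun ij => x.choose ij.1 * (p ^ n * e).choose ij.2) hmem
      have : (X.choose M : ℕ) = (∑ ij ∈ (Finset.HasAntidiagonal.antidiagonal M).erase (M, 0),
          x.choose ij.1 * (p ^ n * e).choose ij.2) + x.choose M := by
        rw [hX, h, ← hsplit]; simp
      rw [this]
      push_cast
      ring
    rw [hvdm, mul_sum]
    apply dvd_sum
    intro ij hij
    have hij2 : ij.1 + ij.2 = M := (Finset.HasAntidiagonal.mem_antidiagonal.mp (Finset.mem_of_mem_erase hij))
    have hjne : ij.2 ≠ 0 := by
      intro h0
      apply (Finset.ne_of_mem_erase hij)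
      have : ij.1 = M := by omega
      ext <;> simp [this, h0]
    -- helper divisibility, cast to ℤ_[p]
    have hd1 : p ^ (n + 1) ∣ p ^ (Nat.log p ij.2 + 1) * (p ^ n * e).choose ij.2 :=
      helper_pow_dvd_choose hp.out n (p ^ n * e) ij.2 (dvd_mul_right _ _) (Nat.pos_of_ne_zero hjne)
    have hd1' : (p : ℤ_[p]) ^ (n + 1) ∣ (p : ℤ_[p]) ^ (Nat.log p ij.2 + 1) * ((p ^ n * e).choose ij.2 : ℤ_[p]) := by
      have := Nat.cast_dvd_cast (α := ℤ_[p]) hd1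
      push_cast at this
      exact this
    have hlog : Nat.log p ij.2 ≤ Nat.log p (M + 1) := Nat.log_mono_right (by omega)
    have hd2 : (p : ℤ_[p]) ^ (n + 1) ∣ (p : ℤ_[p]) ^ (Nat.log p (M + 1) + 1) * ((p ^ n * e).choose ij.2 : ℤ_[p]) :=
      hd1'.trans (mul_dvd_mul_right (pow_dvd_pow _ (by omega)) _)
    obtain ⟨b, hb⟩ := h2 M (by omega)
    obtain ⟨c, hc⟩ := hd2
    refine ⟨b * (x.choose ij.1 : ℤ_[p]) * c, ?_⟩
    rw [hb]
    calc (p:ℤ_[p]) ^ (Nat.log p (M+1) + 1) * b * ((x.choose ij.1 : ℤ_[p]) * ((p ^ n * e).choose ij.2 : ℤ_[p]))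
        = ((p:ℤ_[p]) ^ (Nat.log p (M+1) + 1) * ((p ^ n * e).choose ij.2 : ℤ_[p])) * (b * (x.choose ij.1 : ℤ_[p])) := by ring
      _ = (p:ℤ_[p]) ^ (n+1) * c * (b * (x.choose ij.1 : ℤ_[p])) := by rw [hc]
      _ = (p:ℤ_[p]) ^ (n+1) * (b * (x.choose ij.1 : ℤ_[p]) * c) := by ring

/-- Key lemma K at all p-adic points. -/
lemma keyK (hlip : ∀ x y : ℤ_[p], ‖f x - f y‖ ≤ ‖x - y‖)
    (h1 : (p : ℤ_[p]) ∣ mahlerCoeff f 1 - 1)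
    (h2 : ∀ m : ℕ, 2 ≤ m → (p : ℤ_[p]) ^ (Nat.log p (m + 1) + 1) ∣ mahlerCoeff f m)
    (n : ℕ) (x d : ℤ_[p]) (hd : (p : ℤ_[p]) ^ n ∣ d) :
    (p : ℤ_[p]) ^ (n + 1) ∣ f (x + d) - f x - d := by
  obtain ⟨e, rfl⟩ := hd
  have hcont : Continuous f := by
    have : LipschitzWith 1 f := LipschitzWith.of_dist_le_mul (fun a b => by
      rw [dist_eq_norm, dist_eq_norm, NNReal.coe_one, one_mul]; exact hlip a b)
    exact this.continuous
  set φ : ℤ_[p] × ℤ_[p] → ℤ_[p] :=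
    fun q => f (q.1 + (p : ℤ_[p]) ^ n * q.2) - f q.1 - (p : ℤ_[p]) ^ n * q.2 with hφ
  have hφc : Continuous φ := by
    apply Continuous.sub
    apply Continuous.sub
    · exact hcont.comp (by continuity)
    · exact hcont.comp continuous_fst
    · continuity
  set T : Set (ℤ_[p] × ℤ_[p]) := φ ⁻¹' {z : ℤ_[p] | (p : ℤ_[p]) ^ (n + 1) ∣ z} with hT
  have hTclosed : IsClosed T := (isClosed_dvd (n + 1)).preimage hφc
  have hnat : ∀ a b : ℕ, ((a : ℤ_[p]), (b : ℤ_[p])) ∈ T := by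
    intro a b
    have := keyK_nat f h1 h2 n a b
    simp only [hT, Set.mem_preimage, hφ, Set.mem_setOf_eq]
    convert this using 2
    push_cast
    ring
  have hdr : DenseRange (fun ab : ℕ × ℕ => (((ab.1 : ℤ_[p]), (ab.2 : ℤ_[p])) : ℤ_[p] × ℤ_[p])) :=
    DenseRange.prodMap PadicInt.denseRange_natCast PadicInt.denseRange_natCast
  have hTuniv : T = Set.univ := by
    have h1' : Set.range (fun ab : ℕ × ℕ => (((ab.1 : ℤ_[p]), (ab.2 : ℤ_[p])) : ℤ_[p] × ℤ_[p])) ⊆ T := by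
      rintro _ ⟨⟨a, b⟩, rfl⟩; exact hnat a b
    have := closure_minimal h1' hTclosed
    rw [hdr.closure_range] at this
    exact Set.eq_univ_of_univ_subset this
  have : (x, e) ∈ T := by rw [hTuniv]; trivial
  exact this

/-- 1-Lipschitz maps divisibility forward. -/
lemma dvd_forward (hlip : ∀ x y : ℤ_[p], ‖f x - f y‖ ≤ ‖x - y‖)
    (n : ℕ) (x y : ℤ_[p]) (h : (p : ℤ_[p]) ^ n ∣ x - y) :
    (p : ℤ_[p]) ^ n ∣ f x - f y := by
  rw [dvd_iff_norm] at h ⊢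
  exact le_trans (hlip x y) h

/-- Reflection: divisibility of images pulls back (f is an isometry). -/
lemma dvd_reflect (hlip : ∀ x y : ℤ_[p], ‖f x - f y‖ ≤ ‖x - y‖)
    (h1 : (p : ℤ_[p]) ∣ mahlerCoeff f 1 - 1)
    (h2 : ∀ m : ℕ, 2 ≤ m → (p : ℤ_[p]) ^ (Nat.log p (m + 1) + 1) ∣ mahlerCoeff f m)
    (n : ℕ) : ∀ x y : ℤ_[p], (p : ℤ_[p]) ^ n ∣ f x - f y → (p : ℤ_[p]) ^ n ∣ x - y := by
  induction n with
  | zero => intro x y _; simpa using one_dvd _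
  | succ n ih =>
    intro x y h
    have hn : (p : ℤ_[p]) ^ n ∣ x - y := ih x y ((pow_dvd_pow _ (by omega)).trans h)
    have hd : (p : ℤ_[p]) ^ n ∣ y - x := by
      rw [← neg_sub x y]; exact dvd_neg.mpr hn
    have hk := keyK f hlip h1 h2 n x (y - x) hd
    rw [add_sub_cancel] at hk
    -- hk : p^(n+1) ∣ f y - f x - (y - x)
    have h' : (p : ℤ_[p]) ^ (n + 1) ∣ f y - f x := by
      rw [← neg_sub (f x) (f y)]; exact dvd_neg.mpr h
    have := dvd_sub h' hk
    -- f y - f x - (f y - f x - (y-x)) = y - x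
    have heq : f y - f x - (f y - f x - (y - x)) = y - x := by ring
    rw [heq] at this
    have : (p : ℤ_[p]) ^ (n+1) ∣ -(y - x) := dvd_neg.mpr this
    rwa [neg_sub] at this

/-- Two small naturals congruent mod `p^n` in `ℤ_[p]` are equal. -/
lemma nat_eq_of_dvd (n a b : ℕ) (ha : a < p ^ n) (hb : b < p ^ n)
    (h : (p : ℤ_[p]) ^ n ∣ (a : ℤ_[p]) - (b : ℤ_[p])) : a = b := by
  have hcast : ((a : ℤ) - (b : ℤ) : ℤ) = ((a : ℤ_[p]) - (b : ℤ_[p]) : ℤ_[p]) := by push_cast; ring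
  have hnorm : ‖((((a : ℤ) - b) : ℤ) : ℤ_[p])‖ ≤ (p : ℝ) ^ (-(n : ℤ)) := by
    rw [show ((((a : ℤ) - b) : ℤ) : ℤ_[p]) = (a : ℤ_[p]) - (b : ℤ_[p]) by push_cast; ring]
    exact (dvd_iff_norm n _).mp h
  have hdvd : ((p : ℤ) ^ n) ∣ ((a : ℤ) - b) := PadicInt.norm_int_le_pow_iff_dvd.mp hnorm
  have habs : |(a : ℤ) - b| < (p : ℤ) ^ n := by
    have hPQ : ((p : ℤ)) ^ n = ((p ^ n : ℕ) : ℤ) := by push_cast; ring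
    rw [abs_sub_lt_iff, hPQ]
    omega
  have := Int.eq_zero_of_abs_lt_dvd hdvd habs
  omega

lemma appr_dvd (n : ℕ) (x : ℤ_[p]) : (p : ℤ_[p]) ^ n ∣ x - ((x.appr n : ℕ) : ℤ_[p]) := by
  have := PadicInt.appr_spec n x
  rwa [Ideal.mem_span_singleton] at this

/-- Decomposition of the cycle sum `S_n = a₀ p^n + (p^{n+1}-divisible)`. -/
lemma Sn_decomp (h1s : (p : ℤ_[p]) ^ (Nat.log p 2 + 1) ∣ mahlerCoeff f 1 - 1)
    (h2 : ∀ m : ℕ, 2 ≤ m → (p : ℤ_[p]) ^ (Nat.log p (m + 1) + 1) ∣ mahlerCoeff f m)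
    (n : ℕ) :
    ∃ R : ℤ_[p], (∑ r ∈ range (p ^ n), (f (r : ℤ_[p]) - (r : ℤ_[p])))
      = mahlerCoeff f 0 * (p : ℤ_[p]) ^ n + R ∧ (p : ℤ_[p]) ^ (n + 1) ∣ R := by
  set N := p ^ n with hN
  have hN1 : 1 ≤ N := Nat.one_le_pow _ _ hp.out.pos
  have hgauss : (∑ r ∈ range N, r) = N.choose 2 := by
    have h2' : (∑ r ∈ range N, r) * 2 = N.choose 2 * 2 := by
      rw [Finset.sum_range_id_mul_two, Nat.choose_two_right,
        Nat.div_mul_cancel]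
      rcases Nat.even_or_odd N with h | h
      · exact Dvd.dvd.mul_right (even_iff_two_dvd.mp h) _
      · have : Even (N - 1) := by
          rcases h with ⟨k, hk⟩; exact ⟨k, by omega⟩
        exact Dvd.dvd.mul_left (even_iff_two_dvd.mp this) _
    omega
  have hsum : (∑ r ∈ range N, (f (r : ℤ_[p]) - (r : ℤ_[p])))
      = (∑ m ∈ range N, mahlerCoeff f m * (N.choose (m + 1) : ℤ_[p])) - (N.choose 2 : ℤ_[p]) := by
    rw [sum_sub_distrib, sum_f_nat f N]
    congr 1
    rw [← Nat.cast_sum, hgauss]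
  rcases Nat.lt_or_ge N 2 with hN2 | hN2
  · -- N = 1, i.e. n = 0
    have hNeq : N = 1 := by omega
    have hn0 : n = 0 := by
      by_contra hn
      have : p ≤ p ^ n := Nat.le_self_pow hn p
      have := hp.out.two_le
      omega
    refine ⟨0, ?_, dvd_zero _⟩
    rw [hsum, hNeq, hn0]
    simp
  · -- N ≥ 2
    obtain ⟨K, hK⟩ : ∃ K, N = K + 2 := ⟨N - 2, by omega⟩
    have hpeel : (∑ m ∈ range N, mahlerCoeff f m * (N.choose (m + 1) : ℤ_[p]))
        = mahlerCoeff f 0 * (N.choose 1 : ℤ_[p]) + mahlerCoeff f 1 * (N.choose 2 : ℤ_[p])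
          + ∑ m ∈ range K, mahlerCoeff f (m + 2) * (N.choose (m + 3) : ℤ_[p]) := by
      rw [hK, sum_range_succ' _ (K + 1), sum_range_succ' _ K]
      have hb : ∀ x ∈ range K, mahlerCoeff f (x + 1 + 1) * (((K + 2).choose (x + 1 + 1 + 1) : ℕ) : ℤ_[p])
          = mahlerCoeff f (x + 2) * (((K + 2).choose (x + 3) : ℕ) : ℤ_[p]) := fun x _ => rfl
      rw [sum_congr rfl hb]
      ring
    have hc1 : (N.choose 1 : ℤ_[p]) = ((p : ℤ_[p])) ^ n := by
      rw [Nat.choose_one_right, hN]; push_cast; ring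
    refine ⟨(mahlerCoeff f 1 - 1) * (N.choose 2 : ℤ_[p])
      + ∑ m ∈ range K, mahlerCoeff f (m + 2) * (N.choose (m + 3) : ℤ_[p]), ?_, ?_⟩
    · rw [hsum, hpeel, hc1]; ring
    · apply dvd_add
      · -- (a₁ - 1) * C(N,2)
        have hd : p ^ (n + 1) ∣ p ^ (Nat.log p 2 + 1) * N.choose 2 :=
          helper_pow_dvd_choose hp.out n N 2 (dvd_refl N) (by omega)
        have hd' : (p : ℤ_[p]) ^ (n + 1) ∣ (p : ℤ_[p]) ^ (Nat.log p 2 + 1) * (N.choose 2 : ℤ_[p]) := by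
          have := Nat.cast_dvd_cast (α := ℤ_[p]) hd; push_cast at this; exact this
        obtain ⟨b, hb⟩ := h1s
        obtain ⟨c, hc⟩ := hd'
        refine ⟨b * c, ?_⟩
        rw [hb]
        calc (p:ℤ_[p]) ^ (Nat.log p 2 + 1) * b * (N.choose 2 : ℤ_[p])
            = ((p:ℤ_[p]) ^ (Nat.log p 2 + 1) * (N.choose 2 : ℤ_[p])) * b := by ring
          _ = (p:ℤ_[p]) ^ (n + 1) * c * b := by rw [hc]
          _ = (p:ℤ_[p]) ^ (n + 1) * (b * c) := by ring
      · apply dvd_sum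
        intro m _
        have hd : p ^ (n + 1) ∣ p ^ (Nat.log p (m + 3) + 1) * N.choose (m + 3) :=
          helper_pow_dvd_choose hp.out n N (m + 3) (dvd_refl N) (by omega)
        have hd' : (p : ℤ_[p]) ^ (n + 1) ∣ (p : ℤ_[p]) ^ (Nat.log p (m + 3) + 1) * (N.choose (m + 3) : ℤ_[p]) := by
          have := Nat.cast_dvd_cast (α := ℤ_[p]) hd; push_cast at this; exact this
        obtain ⟨b, hb⟩ := h2 (m + 2) (by omega)
        obtain ⟨c, hc⟩ := hd'
        refine ⟨b * c, ?_⟩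
        rw [show (m + 2) + 1 = m + 3 from rfl] at hb
        rw [hb]
        calc (p:ℤ_[p]) ^ (Nat.log p (m + 3) + 1) * b * (N.choose (m + 3) : ℤ_[p])
            = ((p:ℤ_[p]) ^ (Nat.log p (m + 3) + 1) * (N.choose (m + 3) : ℤ_[p])) * b := by ring
          _ = (p:ℤ_[p]) ^ (n + 1) * c * b := by rw [hc]
          _ = (p:ℤ_[p]) ^ (n + 1) * (b * c) := by ring

/-- The cycle sum is `p^n` times a unit. -/
lemma Sn_unit (h0 : ¬ (p : ℤ_[p]) ∣ mahlerCoeff f 0)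
    (h1s : (p : ℤ_[p]) ^ (Nat.log p 2 + 1) ∣ mahlerCoeff f 1 - 1)
    (h2 : ∀ m : ℕ, 2 ≤ m → (p : ℤ_[p]) ^ (Nat.log p (m + 1) + 1) ∣ mahlerCoeff f m)
    (n : ℕ) :
    ∃ s : ℤ_[p], (∑ r ∈ range (p ^ n), (f (r : ℤ_[p]) - (r : ℤ_[p]))) = (p : ℤ_[p]) ^ n * s
      ∧ ¬ (p : ℤ_[p]) ∣ s := by
  obtain ⟨R, hR, hRd⟩ := Sn_decomp f h1s h2 n
  obtain ⟨c, hc⟩ := hRd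
  refine ⟨mahlerCoeff f 0 + (p : ℤ_[p]) * c, ?_, ?_⟩
  · rw [hR, hc]; ring
  · intro hdvd
    apply h0
    have : (p : ℤ_[p]) ∣ (p : ℤ_[p]) * c := dvd_mul_right _ _
    have := dvd_sub hdvd this
    simpa using this

lemma dvd_forward_iter (hlip : ∀ x y : ℤ_[p], ‖f x - f y‖ ≤ ‖x - y‖) (n : ℕ)
    (k : ℕ) (a b : ℤ_[p]) (h : (p : ℤ_[p]) ^ n ∣ a - b) :
    (p : ℤ_[p]) ^ n ∣ f^[k] a - f^[k] b := by
  induction k with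
  | zero => simpa using h
  | succ k ih =>
    rw [Function.iterate_succ_apply', Function.iterate_succ_apply']
    exact dvd_forward f hlip n _ _ ih

lemma dvd_reflect_iter (hlip : ∀ x y : ℤ_[p], ‖f x - f y‖ ≤ ‖x - y‖)
    (h1 : (p : ℤ_[p]) ∣ mahlerCoeff f 1 - 1)
    (h2 : ∀ m : ℕ, 2 ≤ m → (p : ℤ_[p]) ^ (Nat.log p (m + 1) + 1) ∣ mahlerCoeff f m)
    (n k : ℕ) (a b : ℤ_[p]) (h : (p : ℤ_[p]) ^ n ∣ f^[k] a - f^[k] b) :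
    (p : ℤ_[p]) ^ n ∣ a - b := by
  induction k with
  | zero => simpa using h
  | succ k ih =>
    rw [Function.iterate_succ_apply', Function.iterate_succ_apply'] at h
    exact ih (dvd_reflect f hlip h1 h2 n _ _ h)

section Orbit
variable (hlip : ∀ x y : ℤ_[p], ‖f x - f y‖ ≤ ‖x - y‖)
  (h1 : (p : ℤ_[p]) ∣ mahlerCoeff f 1 - 1)
  (h2 : ∀ m : ℕ, 2 ≤ m → (p : ℤ_[p]) ^ (Nat.log p (m + 1) + 1) ∣ mahlerCoeff f m)
  (n : ℕ)
  (Pn : ∀ y : ℤ_[p], ∃ k, k < p ^ n ∧ (p : ℤ_[p]) ^ n ∣ f^[k] 0 - y)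

include Pn in
lemma orbit_inj : ∀ j k : ℕ, j < p ^ n → k < p ^ n →
    (p : ℤ_[p]) ^ n ∣ f^[j] 0 - f^[k] 0 → j = k := by
  have hmaps : ∀ a : ℕ, a ∈ range (p ^ n) → (f^[a] (0:ℤ_[p])).appr n ∈ range (p ^ n) :=
    fun a _ => mem_range.mpr (PadicInt.appr_lt _ _)
  have hsurj : ∀ b ∈ range (p ^ n), ∃ a, ∃ ha : a ∈ range (p ^ n),
      (fun k (_ : k ∈ range (p ^ n)) => (f^[k] (0:ℤ_[p])).appr n) a ha = b := by
    intro b hb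
    rw [mem_range] at hb
    obtain ⟨k, hk, hdvd⟩ := Pn (b : ℤ_[p])
    refine ⟨k, mem_range.mpr hk, ?_⟩
    have h1' := appr_dvd n (f^[k] (0:ℤ_[p]))
    have h2' : (p : ℤ_[p]) ^ n ∣ ((f^[k] (0:ℤ_[p])).appr n : ℤ_[p]) - (b : ℤ_[p]) := by
      have := dvd_sub hdvd h1'
      have heq : f^[k] (0:ℤ_[p]) - b - (f^[k] (0:ℤ_[p]) - ((f^[k] (0:ℤ_[p])).appr n : ℤ_[p]))
          = ((f^[k] (0:ℤ_[p])).appr n : ℤ_[p]) - b := by ring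
      rwa [heq] at this
    exact nat_eq_of_dvd _ _ _ (PadicInt.appr_lt _ _) hb h2'
  have hinj := Finset.inj_on_of_surj_on_of_card_le
    (fun k (_ : k ∈ range (p ^ n)) => (f^[k] (0:ℤ_[p])).appr n) hmaps hsurj le_rfl
  intro j k hj hk hdvd
  have hoj := appr_dvd n (f^[j] (0:ℤ_[p]))
  have hok := appr_dvd n (f^[k] (0:ℤ_[p]))
  have h3 : (p : ℤ_[p]) ^ n ∣ ((f^[j] (0:ℤ_[p])).appr n : ℤ_[p]) - ((f^[k] (0:ℤ_[p])).appr n : ℤ_[p]) := by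
    have := dvd_sub (dvd_sub hdvd hoj) (dvd_neg.mpr hok)
    have heq : f^[j] (0:ℤ_[p]) - f^[k] 0 - (f^[j] (0:ℤ_[p]) - ((f^[j] (0:ℤ_[p])).appr n : ℤ_[p]))
        - -(f^[k] (0:ℤ_[p]) - ((f^[k] (0:ℤ_[p])).appr n : ℤ_[p]))
        = ((f^[j] (0:ℤ_[p])).appr n : ℤ_[p]) - ((f^[k] (0:ℤ_[p])).appr n : ℤ_[p]) := by ring
    rwa [heq] at this
  have := nat_eq_of_dvd n _ _ (PadicInt.appr_lt _ _) (PadicInt.appr_lt _ _) h3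
  exact hinj (mem_range.mpr hj) (mem_range.mpr hk) this

include hlip h1 h2 Pn in
lemma no_period : ∀ d : ℕ, 0 < d → d < p ^ n → ∀ x : ℤ_[p],
    ¬ (p : ℤ_[p]) ^ n ∣ f^[d] x - x := by
  intro d hd0 hdp x hdvd
  obtain ⟨k₀, hk₀, hcov⟩ := Pn x
  have hfwd : (p : ℤ_[p]) ^ n ∣ f^[d + k₀] 0 - f^[d] x := by
    rw [Function.iterate_add_apply]
    exact dvd_forward_iter f hlip n d _ _ hcov
  have hcomb : (p : ℤ_[p]) ^ n ∣ f^[d + k₀] 0 - f^[k₀] 0 := by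
    have h := dvd_add (dvd_add hfwd hdvd) (dvd_neg.mpr hcov)
    have heq : f^[d + k₀] (0:ℤ_[p]) - f^[d] x + (f^[d] x - x) + -(f^[k₀] (0:ℤ_[p]) - x)
        = f^[d + k₀] (0:ℤ_[p]) - f^[k₀] 0 := by ring
    rwa [heq] at h
  rw [add_comm d k₀, Function.iterate_add_apply] at hcomb
  have hrefl : (p : ℤ_[p]) ^ n ∣ f^[d] (0:ℤ_[p]) - 0 := by
    refine dvd_reflect_iter f hlip h1 h2 n k₀ _ _ ?_
    exact hcomb
  have := orbit_inj f n Pn d 0 hdp (Nat.pow_pos hp.out.pos) (by simpa using hrefl)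
  omega

include hlip h1 h2 Pn in
lemma cycle_sum : ∀ x : ℤ_[p], (p : ℤ_[p]) ^ (n + 1) ∣
    f^[p ^ n] x - x - ∑ r ∈ range (p ^ n), (f (r : ℤ_[p]) - (r : ℤ_[p])) := by
  intro x
  set r : ℕ → ℕ := fun k => (f^[k] x).appr n with hr
  have htele : ∀ k : ℕ, (p : ℤ_[p]) ^ (n + 1) ∣
      f^[k] x - x - ∑ j ∈ range k, (f ((r j : ℕ) : ℤ_[p]) - ((r j : ℕ) : ℤ_[p])) := by
    intro k
    induction k with
    | zero => simp
    | succ k ih =>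
      have hd : (p : ℤ_[p]) ^ n ∣ f^[k] x - ((r k : ℕ) : ℤ_[p]) := appr_dvd n _
      have hK := keyK f hlip h1 h2 n ((r k : ℕ) : ℤ_[p]) (f^[k] x - ((r k : ℕ) : ℤ_[p])) hd
      rw [show ((r k : ℕ) : ℤ_[p]) + (f^[k] x - ((r k : ℕ) : ℤ_[p])) = f^[k] x by ring] at hK
      -- hK : p^(n+1) ∣ f (f^[k] x) - f (r k) - (f^[k] x - r k)
      have h := dvd_add hK ih
      have heq : f (f^[k] x) - f ((r k : ℕ) : ℤ_[p]) - (f^[k] x - ((r k : ℕ) : ℤ_[p]))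
          + (f^[k] x - x - ∑ j ∈ range k, (f ((r j : ℕ) : ℤ_[p]) - ((r j : ℕ) : ℤ_[p])))
          = f^[k + 1] x - x - ∑ j ∈ range (k + 1), (f ((r j : ℕ) : ℤ_[p]) - ((r j : ℕ) : ℤ_[p])) := by
        rw [sum_range_succ, Function.iterate_succ_apply']
        ring
      rwa [heq] at h
  have hreindex : ∑ j ∈ range (p ^ n), (f ((r j : ℕ) : ℤ_[p]) - ((r j : ℕ) : ℤ_[p]))
      = ∑ s ∈ range (p ^ n), (f (s : ℤ_[p]) - (s : ℤ_[p])) := by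
    have hmaps : ∀ a ∈ range (p ^ n), r a ∈ range (p ^ n) :=
      fun a _ => mem_range.mpr (PadicInt.appr_lt _ _)
    have hinj : ∀ a₁ a₂ : ℕ, a₁ ∈ range (p ^ n) → a₂ ∈ range (p ^ n) → r a₁ = r a₂ → a₁ = a₂ := by
      intro a₁ a₂ ha₁ ha₂ hreq
      rw [mem_range] at ha₁ ha₂
      by_contra hne
      -- wlog a₁ < a₂
      rcases Nat.lt_or_ge a₁ a₂ with hlt | hge
      · -- p^n ∣ f^[a₂]x - f^[a₁]x
        have hd1 := appr_dvd n (f^[a₁] x)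
        have hd2 := appr_dvd n (f^[a₂] x)
        have hcmb : (p : ℤ_[p]) ^ n ∣ f^[a₂] x - f^[a₁] x := by
          have h := dvd_sub hd2 hd1
          have heq : f^[a₂] x - ((r a₂ : ℕ) : ℤ_[p]) - (f^[a₁] x - ((r a₁ : ℕ) : ℤ_[p]))
              = f^[a₂] x - f^[a₁] x := by rw [hreq]; ring
          rwa [heq] at h
        obtain ⟨d, hdd⟩ : ∃ d, a₂ = a₁ + d := ⟨a₂ - a₁, by omega⟩
        rw [hdd, Function.iterate_add_apply] at hcmb
        have := dvd_reflect_iter f hlip h1 h2 n a₁ _ _ hcmb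
        exact no_period f hlip h1 h2 n Pn d (by omega) (by omega) x this
      · have hd1 := appr_dvd n (f^[a₁] x)
        have hd2 := appr_dvd n (f^[a₂] x)
        have hlt2 : a₂ < a₁ := by omega
        have hcmb : (p : ℤ_[p]) ^ n ∣ f^[a₁] x - f^[a₂] x := by
          have h := dvd_sub hd1 hd2
          have heq : f^[a₁] x - ((r a₁ : ℕ) : ℤ_[p]) - (f^[a₂] x - ((r a₂ : ℕ) : ℤ_[p]))
              = f^[a₁] x - f^[a₂] x := by rw [hreq]; ring
          rwa [heq] at h
        obtain ⟨d, hdd⟩ : ∃ d, a₁ = a₂ + d := ⟨a₁ - a₂, by omega⟩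
        rw [hdd, Function.iterate_add_apply] at hcmb
        have := dvd_reflect_iter f hlip h1 h2 n a₂ _ _ hcmb
        exact no_period f hlip h1 h2 n Pn d (by omega) (by omega) x this
    have hsurj := Finset.surj_on_of_inj_on_of_card_le
      (fun a (_ : a ∈ range (p ^ n)) => r a) hmaps (fun a₁ a₂ h1 h2 => hinj a₁ a₂ h1 h2) le_rfl
    refine Finset.sum_bij (fun a (_ : a ∈ range (p ^ n)) => r a) hmaps
      (fun a₁ h1 a₂ h2 => hinj a₁ a₂ h1 h2) ?_ ?_
    · intro b hb
      obtain ⟨a, ha, hab⟩ := hsurj b hb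
      exact ⟨a, ha, hab.symm⟩
    · intro a _
      rfl
  have := htele (p ^ n)
  rwa [hreindex] at this

include hlip h1 h2 Pn in
lemma cycle_iter : ∀ (j : ℕ) (x : ℤ_[p]), (p : ℤ_[p]) ^ (n + 1) ∣
    f^[j * p ^ n] x - x - (j : ℤ_[p]) * ∑ r ∈ range (p ^ n), (f (r : ℤ_[p]) - (r : ℤ_[p])) := by
  intro j x
  induction j with
  | zero => simp
  | succ j ih =>
    have hstep := cycle_sum f hlip h1 h2 n Pn (f^[j * p ^ n] x)
    have h := dvd_add hstep ih
    have heq : f^[p ^ n] (f^[j * p ^ n] x) - f^[j * p ^ n] x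
          - ∑ r ∈ range (p ^ n), (f (r : ℤ_[p]) - (r : ℤ_[p]))
        + (f^[j * p ^ n] x - x - (j : ℤ_[p]) * ∑ r ∈ range (p ^ n), (f (r : ℤ_[p]) - (r : ℤ_[p])))
        = f^[(j + 1) * p ^ n] x - x
          - ((j + 1 : ℕ) : ℤ_[p]) * ∑ r ∈ range (p ^ n), (f (r : ℤ_[p]) - (r : ℤ_[p])) := by
      have hit : f^[(j + 1) * p ^ n] x = f^[p ^ n] (f^[j * p ^ n] x) := by
        rw [← Function.iterate_add_apply]
        congr 1
        ring
      rw [hit]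
      push_cast
      ring
    rwa [heq] at h

end Orbit

/-- Solving a linear congruence mod p. -/
lemma exists_j_mod_p (s c : ℤ_[p]) (hs : ¬ (p : ℤ_[p]) ∣ s) :
    ∃ j : ℕ, j < p ∧ (p : ℤ_[p]) ∣ (j : ℤ_[p]) * s + c := by
  have hker : ∀ z : ℤ_[p], PadicInt.toZMod z = 0 ↔ (p : ℤ_[p]) ∣ z := by
    intro z
    rw [← RingHom.mem_ker, PadicInt.ker_toZMod, PadicInt.maximalIdeal_eq_span_p,
      Ideal.mem_span_singleton]
  have hsbar : PadicInt.toZMod s ≠ 0 := fun h => hs ((hker s).mp h)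
  set jz : ZMod p := -(PadicInt.toZMod c) * (PadicInt.toZMod s)⁻¹ with hjz
  refine ⟨jz.val, ZMod.val_lt jz, ?_⟩
  rw [← hker]
  have hcast : ((jz.val : ℕ) : ZMod p) = jz := by
    rw [ZMod.natCast_val, ZMod.cast_id]
  rw [map_add, map_mul, map_natCast, hcast, hjz]
  field_simp
  ring

/-- Transitivity: the orbit of 0 covers every residue mod `p^n`. -/
lemma orbit_covers (hlip : ∀ x y : ℤ_[p], ‖f x - f y‖ ≤ ‖x - y‖)
    (h0 : ¬ (p : ℤ_[p]) ∣ mahlerCoeff f 0)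
    (h1 : (p : ℤ_[p]) ∣ mahlerCoeff f 1 - 1)
    (h1s : (p : ℤ_[p]) ^ (Nat.log p 2 + 1) ∣ mahlerCoeff f 1 - 1)
    (h2 : ∀ m : ℕ, 2 ≤ m → (p : ℤ_[p]) ^ (Nat.log p (m + 1) + 1) ∣ mahlerCoeff f m) :
    ∀ n : ℕ, ∀ y : ℤ_[p], ∃ k, k < p ^ n ∧ (p : ℤ_[p]) ^ n ∣ f^[k] 0 - y := by
  intro n
  induction n with
  | zero => intro y; exact ⟨0, by simp [Nat.pow_pos hp.out.pos], by simp⟩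
  | succ n ih =>
    intro y
    obtain ⟨k, hk, hdvd⟩ := ih y
    obtain ⟨c, hc⟩ := hdvd
    obtain ⟨s, hSn, hsunit⟩ := Sn_unit f h0 h1s h2 n
    obtain ⟨j, hj, hjdvd⟩ := exists_j_mod_p s c hsunit
    refine ⟨j * p ^ n + k, ?_, ?_⟩
    · have : p ^ (n + 1) = p * p ^ n := by ring
      have hp1 : 1 ≤ p := hp.out.pos
      nlinarith [hk, hj]
    · have hD := cycle_iter f hlip h1 h2 n ih j (f^[k] 0)
      rw [← Function.iterate_add_apply] at hD
      obtain ⟨t, ht⟩ := hjdvd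
      obtain ⟨D, hDq⟩ := hD
      refine ⟨D + t, ?_⟩
      rw [hSn] at hDq
      have hexp : f^[j * p ^ n + k] (0:ℤ_[p]) - y
          = (f^[j * p ^ n + k] (0:ℤ_[p]) - f^[k] 0 - (j : ℤ_[p]) * ((p:ℤ_[p]) ^ n * s))
            + (p : ℤ_[p]) ^ n * ((j : ℤ_[p]) * s + c) := by
        linear_combination hc
      rw [hexp, hDq, ht, pow_succ]
      ring

end Main

section MeasureLayer
variable {p : ℕ} [hp : Fact p.Prime]

/-- The coset `c + p^n ℤ_p`. -/
def coset (c : ℤ_[p]) (n : ℕ) : Set ℤ_[p] := {z : ℤ_[p] | (p : ℤ_[p]) ^ n ∣ z - c}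

lemma coset_congr {c c' : ℤ_[p]} {n : ℕ} (h : (p : ℤ_[p]) ^ n ∣ c - c') :
    coset c n = coset c' n := by
  ext z
  simp only [coset, Set.mem_setOf_eq]
  constructor <;> intro hz
  · have := dvd_add hz h
    rwa [show z - c + (c - c') = z - c' by ring] at this
  · have := dvd_sub hz h
    rwa [show z - c' - (c - c') = z - c by ring] at this

lemma self_mem_coset (c : ℤ_[p]) (n : ℕ) : c ∈ coset c n := by
  simp [coset]

lemma isClosed_coset (c : ℤ_[p]) (n : ℕ) : IsClosed (coset c n) := by
  have : coset c n = (fun z : ℤ_[p] => z - c) ⁻¹' {z : ℤ_[p] | (p : ℤ_[p]) ^ n ∣ z} := rfl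
  rw [this]
  exact (isClosed_dvd n).preimage (by continuity)

lemma measurableSet_coset (c : ℤ_[p]) (n : ℕ) : MeasurableSet (coset c n) :=
  (isClosed_coset c n).measurableSet

lemma isOpen_coset (c : ℤ_[p]) (n : ℕ) : IsOpen (coset c n) := by
  rw [Metric.isOpen_iff]
  intro z hz
  refine ⟨(p : ℝ) ^ (-(n : ℤ)), ?_, ?_⟩
  · have : (0:ℝ) < (p : ℝ) := by exact_mod_cast hp.out.pos
    positivity
  · intro w hw
    simp only [Metric.mem_ball, dist_eq_norm] at hw
    have hwz : (p : ℤ_[p]) ^ n ∣ w - z := (dvd_iff_norm n _).mpr hw.le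
    have hzc : (p : ℤ_[p]) ^ n ∣ z - c := hz
    have := dvd_add hwz hzc
    rw [show w - z + (z - c) = w - c by ring] at this
    exact this

lemma coset_norm_subset {c : ℤ_[p]} {n : ℕ} {ε : ℝ} (hε : (p : ℝ) ^ (-(n : ℤ)) < ε) :
    coset c n ⊆ Metric.ball c ε := by
  intro w hw
  simp only [Metric.mem_ball, dist_eq_norm]
  exact lt_of_le_of_lt ((dvd_iff_norm n _).mp hw) hε

/-- The set of all cosets is a topological basis. -/
lemma coset_basis : TopologicalSpace.IsTopologicalBasis
    {S : Set ℤ_[p] | ∃ c : ℤ_[p], ∃ n : ℕ, S = coset c n} := by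
  apply TopologicalSpace.isTopologicalBasis_of_isOpen_of_nhds
  · rintro S ⟨c, n, rfl⟩; exact isOpen_coset c n
  · intro a U haU hU
    obtain ⟨ε, hε, hball⟩ := Metric.isOpen_iff.mp hU a haU
    have hp1 : (0:ℝ) < (p:ℝ)⁻¹ := by
      have : (0:ℝ) < (p : ℝ) := by exact_mod_cast hp.out.pos
      positivity
    have hplt : (p:ℝ)⁻¹ < 1 := by
      rw [inv_lt_one_iff₀]
      right
      exact_mod_cast hp.out.one_lt
    obtain ⟨n, hn⟩ := exists_pow_lt_of_lt_one hε hplt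
    refine ⟨coset a n, ⟨a, n, rfl⟩, self_mem_coset a n, ?_⟩
    refine (coset_norm_subset ?_).trans hball
    rw [zpow_neg, zpow_natCast, ← inv_pow]
    exact hn

lemma coset_piSystem : IsPiSystem {S : Set ℤ_[p] | ∃ c : ℤ_[p], ∃ n : ℕ, S = coset c n} := by
  rintro S1 ⟨c1, n1, rfl⟩ S2 ⟨c2, n2, rfl⟩ hne
  obtain ⟨z, hz1, hz2⟩ := hne
  rcases le_total n1 n2 with h | h
  · refine ⟨c2, n2, ?_⟩
    apply Set.eq_of_subset_of_subset (Set.inter_subset_right)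
    intro w hw
    refine ⟨?_, hw⟩
    have h1 : (p : ℤ_[p]) ^ n1 ∣ w - c2 := (pow_dvd_pow _ h).trans hw
    have h2 : (p : ℤ_[p]) ^ n1 ∣ z - c2 := (pow_dvd_pow _ h).trans hz2
    have := dvd_add (dvd_sub h1 h2) hz1
    rwa [show w - c2 - (z - c2) + (z - c1) = w - c1 by ring] at this
  · refine ⟨c1, n1, ?_⟩
    apply Set.eq_of_subset_of_subset (Set.inter_subset_left)
    intro w hw
    refine ⟨hw, ?_⟩
    have h1 : (p : ℤ_[p]) ^ n2 ∣ w - c1 := (pow_dvd_pow _ h).trans hw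
    have h2 : (p : ℤ_[p]) ^ n2 ∣ z - c1 := (pow_dvd_pow _ h).trans hz1
    have := dvd_add (dvd_sub h1 h2) hz2
    rwa [show w - c1 - (z - c1) + (z - c2) = w - c2 by ring] at this

lemma borel_eq_coset : (inferInstance : MeasurableSpace ℤ_[p])
    = MeasurableSpace.generateFrom {S : Set ℤ_[p] | ∃ c : ℤ_[p], ∃ n : ℕ, S = coset c n} := by
  haveI : TopologicalSpace.SeparableSpace ℤ_[p] :=
    ⟨⟨Set.range (Nat.cast : ℕ → ℤ_[p]), Set.countable_range _, PadicInt.denseRange_natCast⟩⟩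
  haveI : SecondCountableTopology ℤ_[p] := UniformSpace.secondCountable_of_separable _
  rw [BorelSpace.measurable_eq (α := ℤ_[p])]
  exact coset_basis.borel_eq_generateFrom

/-- The cosets of level n partition `ℤ_[p]` into `p^n` pieces. -/
lemma coset_cover (n : ℕ) (z : ℤ_[p]) : ∃ r : ℕ, r < p ^ n ∧ z ∈ coset ((r : ℕ) : ℤ_[p]) n :=
  ⟨z.appr n, PadicInt.appr_lt z n, appr_dvd n z⟩

lemma coset_disj (n : ℕ) {r s : ℕ} (hr : r < p ^ n) (hs : s < p ^ n) (hne : r ≠ s) :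
    Disjoint (coset ((r : ℕ) : ℤ_[p]) n) (coset ((s : ℕ) : ℤ_[p]) n) := by
  rw [Set.disjoint_left]
  intro z hzr hzs
  apply hne
  refine nat_eq_of_dvd n r s hr hs ?_
  have := dvd_sub hzs hzr
  rwa [show z - (s : ℤ_[p]) - (z - (r : ℤ_[p])) = (r : ℤ_[p]) - s by ring] at this

variable (μ : Measure ℤ_[p]) [μ.IsAddHaarMeasure] [IsProbabilityMeasure μ]

lemma coset_translate (c : ℤ_[p]) (n : ℕ) : μ (coset c n) = μ (coset 0 n) := by
  have : coset c n = (fun z : ℤ_[p] => z + (-c)) ⁻¹' (coset 0 n) := by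
    ext z
    simp only [coset, Set.mem_setOf_eq, Set.mem_preimage, sub_zero, ← sub_eq_add_neg]
  rw [this, measure_preimage_add_right]

lemma coset_measure (n : ℕ) (c : ℤ_[p]) : μ (coset c n) = ((p : ℝ≥0∞) ^ n)⁻¹ := by
  have hcover : (Set.univ : Set ℤ_[p]) = ⋃ r ∈ Finset.range (p ^ n), coset ((r : ℕ) : ℤ_[p]) n := by
    ext z
    simp only [Set.mem_univ, true_iff, Set.mem_iUnion]
    obtain ⟨r, hr, hz⟩ := coset_cover n z
    exact ⟨r, by simpa using hr, hz⟩
  have hdisj : (Finset.range (p ^ n) : Set ℕ).Pairwise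
      (Function.onFun Disjoint fun r => coset ((r : ℕ) : ℤ_[p]) n) := by
    intro r hr s hs hne
    exact coset_disj n (by simpa using hr) (by simpa using hs) hne
  have hsum : μ Set.univ = ∑ r ∈ Finset.range (p ^ n), μ (coset ((r : ℕ) : ℤ_[p]) n) := by
    rw [hcover]
    exact measure_biUnion_finset hdisj fun r _ => measurableSet_coset _ n
  rw [measure_univ] at hsum
  have hconst : ∀ r ∈ Finset.range (p ^ n), μ (coset ((r : ℕ) : ℤ_[p]) n) = μ (coset 0 n) :=
    fun r _ => coset_translate μ _ n
  rw [Finset.sum_congr rfl hconst, Finset.sum_const, Finset.card_range] at hsum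
  -- hsum : 1 = (p^n) • μ (coset 0 n)
  have hpn : ((p : ℝ≥0∞) ^ n) ≠ 0 := by
    have : (p : ℝ≥0∞) ≠ 0 := by exact_mod_cast Nat.cast_ne_zero.mpr hp.out.pos.ne'
    exact pow_ne_zero n this
  have hpn' : ((p : ℝ≥0∞) ^ n) ≠ ⊤ :=
    ENNReal.pow_ne_top (ENNReal.natCast_ne_top p)
  have h0 : μ (coset 0 n) = ((p : ℝ≥0∞) ^ n)⁻¹ := by
    have hs : ((p : ℝ≥0∞) ^ n) * μ (coset 0 n) = 1 := by
      rw [hsum, nsmul_eq_mul]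
      push_cast
      ring
    calc μ (coset 0 n) = ((p : ℝ≥0∞) ^ n)⁻¹ * (((p : ℝ≥0∞) ^ n) * μ (coset 0 n)) := by
          rw [← mul_assoc, ENNReal.inv_mul_cancel hpn hpn', one_mul]
      _ = ((p : ℝ≥0∞) ^ n)⁻¹ := by rw [hs, mul_one]
  rw [coset_translate μ c n, h0]

end MeasureLayer

section Final
variable {p : ℕ} [hp : Fact p.Prime] (f : ℤ_[p] → ℤ_[p])
  (hlip : ∀ x y : ℤ_[p], ‖f x - f y‖ ≤ ‖x - y‖)
  (h0 : ¬ (p : ℤ_[p]) ∣ mahlerCoeff f 0)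
  (h1 : (p : ℤ_[p]) ∣ mahlerCoeff f 1 - 1)
  (h1s : (p : ℤ_[p]) ^ (Nat.log p 2 + 1) ∣ mahlerCoeff f 1 - 1)
  (h2 : ∀ m : ℕ, 2 ≤ m → (p : ℤ_[p]) ^ (Nat.log p (m + 1) + 1) ∣ mahlerCoeff f m)

include hlip h0 h1 h1s h2 in
lemma preimage_coset (n k : ℕ) (hk : k < p ^ n) :
    f ⁻¹' coset (f^[k + 1] 0) n = coset (f^[k] 0) n := by
  have Pn := orbit_covers f hlip h0 h1 h1s h2 n
  ext z
  simp only [Set.mem_preimage, coset, Set.mem_setOf_eq]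
  constructor
  · intro hz
    obtain ⟨j, hj, hcov⟩ := Pn z
    have hfwd : (p : ℤ_[p]) ^ n ∣ f^[j + 1] 0 - f z := by
      rw [Function.iterate_succ_apply']
      exact dvd_forward f hlip n _ _ hcov
    have hcomb : (p : ℤ_[p]) ^ n ∣ f^[j + 1] 0 - f^[k + 1] 0 := by
      have h := dvd_add hfwd hz
      rwa [show f^[j+1] (0:ℤ_[p]) - f z + (f z - f^[k+1] 0) = f^[j+1] (0:ℤ_[p]) - f^[k+1] 0
        by ring] at h
    rw [Function.iterate_succ_apply', Function.iterate_succ_apply'] at hcomb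
    have hrefl := dvd_reflect f hlip h1 h2 n _ _ hcomb
    have hjk := orbit_inj f n Pn j k hj hk hrefl
    subst hjk
    have := dvd_neg.mpr hcov
    rwa [neg_sub] at this
  · intro hz
    have h := dvd_forward f hlip n z (f^[k] 0) hz
    rwa [show f (f^[k] (0:ℤ_[p])) = f^[k+1] 0 from (Function.iterate_succ_apply' f k 0).symm] at h

include hlip h0 h1 h1s h2 in
lemma exists_preimage_coset (c : ℤ_[p]) (n : ℕ) :
    ∃ c' : ℤ_[p], f ⁻¹' coset c n = coset c' n := by
  have Pn := orbit_covers f hlip h0 h1 h1s h2 n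
  obtain ⟨k, hk, hdvd⟩ := Pn c
  have hco : coset c n = coset (f^[k] 0) n :=
    (coset_congr hdvd).symm
  rcases Nat.eq_zero_or_pos k with rfl | hkpos
  · -- k = 0 : use the cycle property  f^[p^n] 0 ≡ 0
    have hpn1 : 1 ≤ p ^ n := Nat.one_le_pow _ _ hp.out.pos
    obtain ⟨s, hSn, _⟩ := Sn_unit f h0 h1s h2 n
    have hcyc := cycle_sum f hlip h1 h2 n Pn 0
    have hdvd2 : (p : ℤ_[p]) ^ n ∣ f^[p ^ n] (0:ℤ_[p]) - f^[0] 0 := by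
      simp only [Function.iterate_zero_apply, sub_zero]
      have h1' : (p : ℤ_[p]) ^ n ∣ f^[p ^ n] (0:ℤ_[p]) - 0 -
          ∑ r ∈ Finset.range (p ^ n), (f (r : ℤ_[p]) - (r : ℤ_[p])) :=
        (pow_dvd_pow _ (Nat.le_succ n)).trans hcyc
      have h2' : (p : ℤ_[p]) ^ n ∣ ∑ r ∈ Finset.range (p ^ n), (f (r : ℤ_[p]) - (r : ℤ_[p])) :=
        ⟨s, hSn⟩
      have := dvd_add h1' h2'
      rw [show f^[p ^ n] (0:ℤ_[p]) - 0 - ∑ r ∈ Finset.range (p ^ n), (f (r : ℤ_[p]) - (r : ℤ_[p]))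
        + ∑ r ∈ Finset.range (p ^ n), (f (r : ℤ_[p]) - (r : ℤ_[p])) = f^[p^n] (0:ℤ_[p]) - 0 by ring]
        at this
      exact (sub_zero (f^[p ^ n] (0:ℤ_[p]))) ▸ this
    have hco2 : coset (f^[0] (0:ℤ_[p])) n = coset (f^[p ^ n] 0) n :=
      (coset_congr hdvd2).symm
    refine ⟨f^[p ^ n - 1] 0, ?_⟩
    rw [hco, hco2]
    have : p ^ n - 1 + 1 = p ^ n := by omega
    rw [← this]
    exact preimage_coset f hlip h0 h1 h1s h2 n (p ^ n - 1) (by omega)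
  · obtain ⟨k', rfl⟩ : ∃ k', k = k' + 1 := ⟨k - 1, by omega⟩
    refine ⟨f^[k'] 0, ?_⟩
    rw [hco]
    exact preimage_coset f hlip h0 h1 h1s h2 n k' (by omega)

end Final


/-- A 1-Lipschitz `f : ℤ_p → ℤ_p` whose Mahler coefficients satisfy `a_0 ≢ 0 (mod p)`,
`a_1 ≡ 1 (mod p)` for odd `p` (resp. `a_1 ≡ 1 (mod 4)` for `p = 2`), and
`a_m ≡ 0 (mod p^{⌊log_p (m+1)⌋ + 1})` for all `m ≥ 2` is ergodic with respect to the
normalized Haar measure on `ℤ_p` (in particular it is measure-preserving and every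
measurable invariant set has measure `0` or `1`). -/
theorem oneLipschitz_ergodic (p : ℕ) [Fact p.Prime] (f : ℤ_[p] → ℤ_[p])
    (hlip : ∀ x y : ℤ_[p], ‖f x - f y‖ ≤ ‖x - y‖)
    (h0 : ¬ (p : ℤ_[p]) ∣ mahlerCoeff f 0)
    (h1odd : p ≠ 2 → (p : ℤ_[p]) ∣ (mahlerCoeff f 1 - 1))
    (h1two : p = 2 → (4 : ℤ_[p]) ∣ (mahlerCoeff f 1 - 1))
    (h2 : ∀ m : ℕ, 2 ≤ m → (p : ℤ_[p]) ^ (Nat.log p (m + 1) + 1) ∣ mahlerCoeff f m)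
    (μ : Measure ℤ_[p]) [μ.IsAddHaarMeasure] [IsProbabilityMeasure μ] :
    (∀ S : Set ℤ_[p], MeasurableSet S → μ (f ⁻¹' S) = μ S) ∧
    (∀ S : Set ℤ_[p], MeasurableSet S → f ⁻¹' S = S → μ S = 0 ∨ μ S = 1) := by
  have hp : Fact p.Prime := inferInstance
  -- normalize the a₁ hypotheses
  have h1s : (p : ℤ_[p]) ^ (Nat.log p 2 + 1) ∣ mahlerCoeff f 1 - 1 := by
    by_cases hp2 : p = 2
    · subst hp2
      have : Nat.log 2 2 = 1 := Nat.log_eq_of_pow_le_of_lt_pow (by norm_num) (by norm_num)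
      rw [this]
      have h4 : ((2:ℕ) : ℤ_[2]) ^ 2 = (4 : ℤ_[2]) := by norm_num
      rw [h4]
      exact h1two rfl
    · have hlt : 2 < p := by
        have := hp.out.two_le
        omega
      have : Nat.log p 2 = 0 := Nat.log_eq_zero_iff.mpr (Or.inl hlt)
      rw [this, pow_one]
      exact h1odd hp2
  have h1 : (p : ℤ_[p]) ∣ mahlerCoeff f 1 - 1 :=
    (dvd_pow_self (p : ℤ_[p]) (Nat.succ_ne_zero _)).trans h1s
  -- measurability of f
  have hcont : Continuous f := by
    have : LipschitzWith 1 f := LipschitzWith.of_dist_le_mul (fun a b => by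
      rw [dist_eq_norm, dist_eq_norm, NNReal.coe_one, one_mul]; exact hlip a b)
    exact this.continuous
  have hmeasf : Measurable f := hcont.measurable
  haveI : IsProbabilityMeasure (μ.map f) := Measure.isProbabilityMeasure_map hmeasf.aemeasurable
  -- measure preservation
  have hmap : μ.map f = μ := by
    apply ext_of_generate_finite _ borel_eq_coset coset_piSystem
    · rintro S ⟨c, n, rfl⟩
      rw [Measure.map_apply hmeasf (measurableSet_coset c n)]
      obtain ⟨c', hc'⟩ := exists_preimage_coset f hlip h0 h1 h1s h2 c n
      rw [hc', coset_measure μ n c', coset_measure μ n c]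
    · simp
  have hmp : ∀ S : Set ℤ_[p], MeasurableSet S → μ (f ⁻¹' S) = μ S := by
    intro S hS
    rw [← Measure.map_apply hmeasf hS, hmap]
  refine ⟨hmp, ?_⟩
  -- ergodicity
  intro S hS hinv
  -- the measure of S on each coset is proportional
  have key : ∀ (n : ℕ) (c : ℤ_[p]), μ (S ∩ coset c n) = μ S * ((p : ℝ≥0∞) ^ n)⁻¹ := by
    intro n c
    have Pn := orbit_covers f hlip h0 h1 h1s h2 n
    have step : ∀ k, k < p ^ n →
        μ (S ∩ coset (f^[k + 1] 0) n) = μ (S ∩ coset (f^[k] 0) n) := by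
      intro k hk
      have hpre : f ⁻¹' (S ∩ coset (f^[k + 1] 0) n) = S ∩ coset (f^[k] 0) n := by
        rw [Set.preimage_inter, hinv, preimage_coset f hlip h0 h1 h1s h2 n k hk]
      have := hmp (S ∩ coset (f^[k + 1] 0) n) (hS.inter (measurableSet_coset _ n))
      rw [hpre] at this
      exact this.symm
    have const : ∀ k, k ≤ p ^ n →
        μ (S ∩ coset (f^[k] 0) n) = μ (S ∩ coset (f^[0] 0) n) := by
      intro k
      induction k with
      | zero => intro _; rfl
      | succ k ih =>
        intro hk
        rw [step k (by omega), ih (by omega)]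
    -- sum over the partition
    have hsum : μ S = ∑ r ∈ Finset.range (p ^ n), μ (S ∩ coset ((r : ℕ) : ℤ_[p]) n) := by
      have hcover : S = ⋃ r ∈ Finset.range (p ^ n), (S ∩ coset ((r : ℕ) : ℤ_[p]) n) := by
        ext z
        simp only [Set.mem_iUnion, Set.mem_inter_iff]
        constructor
        · intro hz
          obtain ⟨r, hr, hzr⟩ := coset_cover n z
          exact ⟨r, by simpa using hr, hz, hzr⟩
        · rintro ⟨r, _, hz, _⟩; exact hz
      have hdisjS : (↑(Finset.range (p ^ n)) : Set ℕ).Pairwise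
          (Function.onFun Disjoint fun r => S ∩ coset ((r : ℕ) : ℤ_[p]) n) := by
        intro r hr s' hs' hne
        have hr' : r < p ^ n := by simpa using hr
        have hs'' : s' < p ^ n := by simpa using hs'
        exact (coset_disj n hr' hs'' hne).mono Set.inter_subset_right Set.inter_subset_right
      calc μ S = μ (⋃ r ∈ Finset.range (p ^ n), (S ∩ coset ((r : ℕ) : ℤ_[p]) n)) := by
            rw [← hcover]
        _ = ∑ r ∈ Finset.range (p ^ n), μ (S ∩ coset ((r : ℕ) : ℤ_[p]) n) :=
            measure_biUnion_finset hdisjS (fun r _ => hS.inter (measurableSet_coset _ n))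
    -- every coset of level n is an orbit coset
    have hval : ∀ c' : ℤ_[p], μ (S ∩ coset c' n) = μ (S ∩ coset (f^[0] 0) n) := by
      intro c'
      obtain ⟨k, hk, hdvd⟩ := Pn c'
      rw [show coset c' n = coset (f^[k] 0) n from (coset_congr hdvd).symm]
      exact const k (by omega)
    have hsum2 : μ S = (p ^ n : ℕ) • μ (S ∩ coset (f^[0] 0) n) := by
      rw [hsum, Finset.sum_congr rfl (fun r _ => hval ((r : ℕ) : ℤ_[p])), Finset.sum_const,
        Finset.card_range]
    have hpn : ((p : ℝ≥0∞) ^ n) ≠ 0 :=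
      pow_ne_zero n (by exact_mod_cast Nat.cast_ne_zero.mpr hp.out.pos.ne')
    have hpn' : ((p : ℝ≥0∞) ^ n) ≠ ⊤ := ENNReal.pow_ne_top (ENNReal.natCast_ne_top p)
    rw [hval c]
    calc μ (S ∩ coset (f^[0] 0) n)
        = ((p : ℝ≥0∞) ^ n)⁻¹ * ((p : ℝ≥0∞) ^ n * μ (S ∩ coset (f^[0] 0) n)) := by
          rw [← mul_assoc, ENNReal.inv_mul_cancel hpn hpn', one_mul]
      _ = ((p : ℝ≥0∞) ^ n)⁻¹ * μ S := by
          rw [hsum2, nsmul_eq_mul]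
          congr 1
          push_cast
          ring
      _ = μ S * ((p : ℝ≥0∞) ^ n)⁻¹ := mul_comm _ _
  -- compare restrict and smul measures
  haveI : IsFiniteMeasure (μ.restrict S) := inferInstance
  have hrs : μ.restrict S = (μ S) • μ := by
    apply ext_of_generate_finite _ borel_eq_coset coset_piSystem
    · rintro T ⟨c, n, rfl⟩
      rw [Measure.restrict_apply (measurableSet_coset c n), Set.inter_comm,
        Measure.smul_apply, smul_eq_mul, coset_measure μ n c, key n c]
    · rw [Measure.restrict_apply_univ, Measure.smul_apply, smul_eq_mul, measure_univ, mul_one]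
  have hzero : μ (Sᶜ ∩ S) = μ S * μ Sᶜ := by
    have := congrArg (fun ν : Measure ℤ_[p] => ν Sᶜ) hrs
    simpa [Measure.restrict_apply hS.compl, Measure.smul_apply, smul_eq_mul] using this
  rw [Set.compl_inter_self, measure_empty] at hzero
  have hcompl : μ Sᶜ = 1 - μ S := prob_compl_eq_one_sub hS
  rcases mul_eq_zero.mp hzero.symm with h | h
  · exact Or.inl h
  · right
    rw [hcompl] at h
    have hle : μ S ≤ 1 := prob_le_one
    have : (1:ℝ≥0∞) ≤ μ S := tsub_eq_zero_iff_le.mp h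
    exact le_antisymm hle this
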